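/- Let u, w : ℝ × ℤ → ℂ be differentiable in the real variable t, with w(t,n)² = 1 + u(t,n)², u(t,n) ≠ 0 and w(t,n) ≠ 0 for all (t,n), and suppose u solves the discrete Kaup–Kupershmidt equation ∂_t u(t,n) = w(t,n)² ( u(t,n+2) w(t,n+1) − u(t,n−2) w(t,n−1) ) (so that automatically ∂_t w = u ∂_t u / w). Then for every λ ∈ ℂ with λ ≠ 0 and all (t,n), the Lax matrices satisfy the zero-curvature (compatibility) equation ∂_t U(λ)(t,n) = V(λ)(t,n+1) · U(λ)(t,n) − U(λ)(t,n) · V(λ)(t,n). -/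

import Mathlib

set_option maxHeartbeats 1000000


/-- The Lax matrix `U(λ)` at site `n`, for fields `u w : ℝ × ℤ → ℂ`. -/
noncomputable def laxU (u w : ℝ × ℤ → ℂ) (lam : ℂ) (t : ℝ) (n : ℤ) :
    Matrix (Fin 3) (Fin 3) ℂ :=
  !![u (t, n+1) / (u (t, n) * w (t, n+1)), lam / w (t, n+1),
      -lam * u (t, n+1) * w (t, n) / (u (t, n) * w (t, n+1));
    1, 0, 0;
    0, 1, 0]

/-- The Lax matrix `V(λ)` at site `n`, for fields `u w : ℝ × ℤ → ℂ`. -/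
noncomputable def laxV (u w : ℝ × ℤ → ℂ) (lam : ℂ) (t : ℝ) (n : ℤ) :
    Matrix (Fin 3) (Fin 3) ℂ :=
  !![lam + u (t, n+2) * w (t, n+1) / u (t, n), -(u (t, n) * u (t, n+1)),
      -(w (t, n) + lam * u (t, n+2) * w (t, n) * w (t, n+1) / u (t, n));
    u (t, n+1) * w (t, n)^2 / u (t, n) + u (t, n-1) * w (t, n) / (lam * u (t, n)),
      lam - 1/lam,
      -(u (t, n-1) * w (t, n)^2 / u (t, n) + lam * u (t, n+1) * w (t, n) / u (t, n));
    w (t, n) + u (t, n-2) * w (t, n) * w (t, n-1) / (lam * u (t, n)),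
      u (t, n) * u (t, n-1),
      -(1/lam + u (t, n-2) * w (t, n-1) / u (t, n))]

/-- Zero-curvature (compatibility) equation for the discrete Kaup–Kupershmidt equation:
if `u` solves `∂ₜ u = w² (u₂ w₁ − u₋₂ w₋₁)` with `w² = 1 + u²`, then
`∂ₜ U(λ) = V(λ)|_{n+1} · U(λ)|_n − U(λ)|_n · V(λ)|_n`. -/
theorem zero_curvature_dKK (u w : ℝ × ℤ → ℂ)
    (hud : ∀ n : ℤ, Differentiable ℝ (fun t : ℝ => u (t, n)))
    (hwd : ∀ n : ℤ, Differentiable ℝ (fun t : ℝ => w (t, n)))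
    (hw2 : ∀ (t : ℝ) (n : ℤ), (w (t, n))^2 = 1 + (u (t, n))^2)
    (hu0 : ∀ (t : ℝ) (n : ℤ), u (t, n) ≠ 0)
    (hw0 : ∀ (t : ℝ) (n : ℤ), w (t, n) ≠ 0)
    (heq : ∀ (t : ℝ) (n : ℤ), deriv (fun s : ℝ => u (s, n)) t
      = (w (t, n))^2 * (u (t, n+2) * w (t, n+1) - u (t, n-2) * w (t, n-1)))
    (lam : ℂ) (hlam : lam ≠ 0) (t : ℝ) (n : ℤ) :
    ∀ i j : Fin 3, deriv (fun s : ℝ => laxU u w lam s n i j) t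
      = (laxV u w lam t (n+1) * laxU u w lam t n
          - laxU u w lam t n * laxV u w lam t n) i j := by
  -- derivative facts
  have hu' : ∀ m : ℤ, HasDerivAt (fun s : ℝ => u (s, m))
      ((w (t, m))^2 * (u (t, m+2) * w (t, m+1) - u (t, m-2) * w (t, m-1))) t := by
    intro m
    have h := ((hud m) t).hasDerivAt
    rwa [heq t m] at h
  have hw' : ∀ m : ℤ, HasDerivAt (fun s : ℝ => w (s, m))
      (u (t,m) * ((w (t, m))^2 * (u (t, m+2) * w (t, m+1) - u (t, m-2) * w (t, m-1))) / w (t,m)) t := by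
    intro m
    have hum := hu' m
    have hwm := ((hwd m) t).hasDerivAt
    have h2 : HasDerivAt (fun s : ℝ => (w (s, m))^2) (2 * w (t,m) * deriv (fun s : ℝ => w (s, m)) t) t := by
      have := hwm.fun_mul hwm
      simpa [pow_two] using this.congr_deriv (by ring)
    have h2' : HasDerivAt (fun s : ℝ => 1 + (u (s, m))^2)
        (2 * u (t,m) * ((w (t, m))^2 * (u (t, m+2) * w (t, m+1) - u (t, m-2) * w (t, m-1)))) t := by
      have := (hum.mul hum).const_add 1
      simpa [pow_two] using this.congr_deriv (by ring)
    have hfun : (fun s : ℝ => (w (s, m))^2) = (fun s : ℝ => 1 + (u (s, m))^2) := by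
      funext s; exact hw2 s m
    rw [hfun] at h2
    have hval : deriv (fun s : ℝ => w (s, m)) t
        = u (t,m) * ((w (t, m))^2 * (u (t, m+2) * w (t, m+1) - u (t, m-2) * w (t, m-1))) / w (t,m) := by
      have huniq := h2.unique h2'
      rw [eq_div_iff (hw0 t m)]
      linear_combination huniq / 2
    rw [← hval]; exact hwm
  have hi1 : n + 1 + 1 = n + 2 := by ring
  have hi2 : n + 1 + 2 = n + 3 := by ring
  have hi3 : n + 1 - 1 = n := by ring
  have hi4 : n + 1 - 2 = n - 1 := by ring
  have hu'0 := hu' n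
  have hu'1 := hu' (n+1); rw [hi1, hi2, hi3, hi4] at hu'1
  have hw'0 := hw' n
  have hw'1 := hw' (n+1); rw [hi1, hi2, hi3, hi4] at hw'1
  have hne0 : u (t, n) ≠ 0 := hu0 t n
  have hne1 : u (t, n+1) ≠ 0 := hu0 t (n+1)
  have hwne0 : w (t, n) ≠ 0 := hw0 t n
  have hwne1 : w (t, n+1) ≠ 0 := hw0 t (n+1)
  have hden : u (t, n) * w (t, n+1) ≠ 0 := mul_ne_zero hne0 hwne1
  have hIl : lam * lam⁻¹ = 1 := mul_inv_cancel₀ hlam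
  have hI0 : u (t, n) * (u (t, n))⁻¹ = 1 := mul_inv_cancel₀ hne0
  have hI1 : u (t, n+1) * (u (t, n+1))⁻¹ = 1 := mul_inv_cancel₀ hne1
  have hIw1 : w (t, n+1) * (w (t, n+1))⁻¹ = 1 := mul_inv_cancel₀ hwne1
  intro i j
  fin_cases i <;> fin_cases j <;>
    simp only [laxU, laxV, Matrix.sub_apply, Matrix.mul_apply, Fin.sum_univ_three,
      Fin.mk_zero, Fin.mk_one, show (⟨2, by norm_num⟩ : Fin 3) = 2 from rfl,
      Matrix.cons_val', Matrix.cons_val_zero, Matrix.cons_val_one, Matrix.head_cons,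
      Matrix.empty_val', Matrix.cons_val_fin_one, Matrix.head_fin_const, Matrix.of_apply,
      Fin.isValue, Matrix.cons_val_two, Matrix.tail_cons, hi1, hi2, hi3, hi4]

  -- entry 0 0
  case _ =>
    rw [(hu'1.fun_div (hu'0.fun_mul hw'1) hden).deriv]
    field_simp [hlam, hne0, hne1, hwne0, hwne1]
    linear_combination ((-1)*u (t, n+1)^2*u (t, n+2)*w (t, n+1)) * (hw2 t n) + ((1)*u (t, n)*u (t, n+1)*u (t, n+3)*w (t, n+2) + (-1)*u (t, n-1)*u (t, n)*u (t, n+1)*w (t, n)) * (hw2 t (n+1))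
  -- entry 0 1
  case _ =>
    rw [((hasDerivAt_const t lam).fun_div hw'1 hwne1).deriv]
    field_simp [hlam, hne0, hne1, hwne0, hwne1]
    linear_combination (0) * (hw2 t n) + ((1)*u (t, n+1) + (1)*lam*u (t, n+3)*w (t, n+2)) * (hw2 t (n+1))
  -- entry 0 2
  case _ =>
    rw [((((hasDerivAt_const t (-lam)).fun_mul hu'1).fun_mul hw'0).fun_div (hu'0.fun_mul hw'1) hden).deriv]
    field_simp [hlam, hne0, hne1, hwne0, hwne1]
    linear_combination ((1)*lam*u (t, n-1)*u (t, n)*u (t, n+1)*w (t, n+1)^2 + (1)*lam*u (t, n+1)^2*u (t, n+2)*w (t, n)*w (t, n+1) + (-1)*lam*u (t, n-2)*u (t, n+1)^2*w (t, n-1)*w (t, n) + (-1)*lam*u (t, n-1)*u (t, n)*u (t, n+1)^3 + (-1)*lam*u (t, n-1)*u (t, n)*u (t, n+1)) * (hw2 t n) + ((-1)*lam*u (t, n)*u (t, n+1)*u (t, n+3)*w (t, n)*w (t, n+2) + (1)*lam*u (t, n-1)*u (t, n)*u (t, n+1) + (1)*lam*u (t, n-1)*u (t, n)^3*u (t, n+1))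 * (hw2 t (n+1))
  -- entry 1 0
  case _ =>
    rw [deriv_const]
    field_simp [hlam, hne0, hne1, hwne0, hwne1]
    linear_combination (0) * (hw2 t n) + (0) * (hw2 t (n+1))
  -- entry 1 1
  case _ =>
    rw [deriv_const]
    field_simp [hlam, hne0, hne1, hwne0, hwne1]
    linear_combination (0) * (hw2 t n) + ((1)*lam*u (t, n)) * (hw2 t (n+1))
  -- entry 1 2
  case _ =>
    rw [deriv_const]
    field_simp [hlam, hne0, hne1, hwne0, hwne1]
    ring
  -- entry 2 0
  case _ =>
    rw [deriv_const]
    field_simp [hlam, hne0, hne1, hwne0, hwne1]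
    linear_combination ((1)*lam*u (t, n+1)^2) * (hw2 t n) + (0) * (hw2 t (n+1))
  -- entry 2 1
  case _ =>
    rw [deriv_const]
    field_simp [hlam, hne0, hne1, hwne0, hwne1]
    ring
  -- entry 2 2
  case _ =>
    rw [deriv_const]
    field_simp [hlam, hne0, hne1, hwne0, hwne1]
    ring
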